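/- Let g be a finite-dimensional Lie algebra over ℂ, μ ∈ g*, and Φ ∈ S(g)^g a Poisson-central element. Then all directional derivatives ∂_μⁿΦ (n ≥ 0) along μ pairwise Poisson-commute in S(g), and moreover ∂_μⁿΦ Poisson-commutes with ∂_μᵐΨ for any other invariant Ψ ∈ S(g)^g and any m, n ≥ 0. -/

import Mathlib

open MvPolynomial

variable {ι g : Type*} [Fintype ι] [DecidableEq ι]
  [LieRing g] [LieAlgebra ℂ g]

/-- The linear embedding of `g` into `S(g) = ℂ[g*]`, written in the basis `b`. -/
noncomputable def toPoly (b : Module.Basis ι ℂ g) (x : g) : MvPolynomial ι ℂ :=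
  ∑ i, (b.repr x i) • X i

/-- The Poisson–Lie bracket on `S(g) = ℂ[g*]`, written in the basis `b`:
`{f,h} = Σ_{i,j} ∂_i f ∂_j h · [b i, b j]`. -/
noncomputable def liePB (b : Module.Basis ι ℂ g) (f h : MvPolynomial ι ℂ) : MvPolynomial ι ℂ :=
  ∑ i, ∑ j, pderiv i f * pderiv j h * toPoly b ⁅b i, b j⁆

/-- The directional derivative `∂_μ` on `S(g) = ℂ[g*]` in the direction `μ ∈ g*`,
written in the basis `b`: `∂_μ f = Σ_i μ(b i) ∂_i f`. -/
noncomputable def dirDeriv (b : Module.Basis ι ℂ g) (μ : Module.Dual ℂ g)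
    (f : MvPolynomial ι ℂ) : MvPolynomial ι ℂ :=
  ∑ i, μ (b i) • pderiv i f

namespace Stmt3Aux

set_option linter.unusedSectionVars false

variable (b : Module.Basis ι ℂ g) (μ : Module.Dual ℂ g)

/-- The "frozen" constant-coefficient bracket. -/
noncomputable def cC (f h : MvPolynomial ι ℂ) : MvPolynomial ι ℂ :=
  ∑ i, ∑ j, pderiv i f * pderiv j h * C (μ ⁅b i, b j⁆)

lemma pderiv_comm (i j : ι) (f : MvPolynomial ι ℂ) :
    pderiv i (pderiv j f) = pderiv j (pderiv i f) := by
  induction f using MvPolynomial.induction_on' with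
  | monomial s a =>
    by_cases h : i = j
    · subst h; rfl
    · simp only [pderiv_monomial]
      rw [tsub_tsub, tsub_tsub, add_comm]
      congr 1
      rw [Finsupp.tsub_apply, Finsupp.tsub_apply, Finsupp.single_apply, Finsupp.single_apply]
      simp [h, Ne.symm h]
      ring
  | add p q hp hq => simp [map_add, hp, hq]

lemma pderiv_toPoly (k : ι) (x : g) : pderiv k (toPoly b x) = C (b.repr x k) := by
  simp only [toPoly, map_sum, map_smul, pderiv_X]
  rw [Finset.sum_eq_single k]
  · simp [Pi.single_apply, smul_eq_C_mul]
  · intro i _ hik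
    simp [Pi.single_apply, hik]
  · simp

lemma dirDeriv_toPoly (x : g) : dirDeriv b μ (toPoly b x) = C (μ x) := by
  simp only [dirDeriv, pderiv_toPoly]
  have : μ x = ∑ i, b.repr x i * μ (b i) := by
    conv_lhs => rw [← b.sum_repr x]
    rw [map_sum]; simp only [map_smul, smul_eq_mul]
  rw [this, map_sum]
  refine Finset.sum_congr rfl fun i _ => ?_
  rw [smul_eq_C_mul, ← C_mul, mul_comm]

lemma dirDeriv_mul (f h : MvPolynomial ι ℂ) :
    dirDeriv b μ (f * h) = dirDeriv b μ f * h + f * dirDeriv b μ h := by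
  simp only [dirDeriv, pderiv_mul, smul_add, Finset.sum_add_distrib,
    Finset.sum_mul, Finset.mul_sum, smul_mul_assoc, mul_smul_comm]

lemma dirDeriv_sum {α : Type*} (s : Finset α) (F : α → MvPolynomial ι ℂ) :
    dirDeriv b μ (∑ x ∈ s, F x) = ∑ x ∈ s, dirDeriv b μ (F x) := by
  simp only [dirDeriv, map_sum, Finset.smul_sum]
  exact Finset.sum_comm

lemma dirDeriv_smul (c : ℂ) (f : MvPolynomial ι ℂ) :
    dirDeriv b μ (c • f) = c • dirDeriv b μ f := by
  simp only [dirDeriv, Finset.smul_sum]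
  refine Finset.sum_congr rfl fun i _ => ?_
  rw [(pderiv i).map_smul, smul_comm]

lemma dirDeriv_zero : dirDeriv b μ (0 : MvPolynomial ι ℂ) = 0 := by
  simp [dirDeriv]

lemma pderiv_dirDeriv (j : ι) (f : MvPolynomial ι ℂ) :
    pderiv j (dirDeriv b μ f) = dirDeriv b μ (pderiv j f) := by
  simp only [dirDeriv, map_sum]
  refine Finset.sum_congr rfl fun i _ => ?_
  rw [(pderiv j).map_smul, pderiv_comm]

lemma dirDeriv_liePB (f h : MvPolynomial ι ℂ) :
    dirDeriv b μ (liePB b f h) =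
      liePB b (dirDeriv b μ f) h + liePB b f (dirDeriv b μ h) + cC b μ f h := by
  have key : ∀ i j : ι,
      dirDeriv b μ (pderiv i f * pderiv j h * toPoly b ⁅b i, b j⁆) =
        pderiv i (dirDeriv b μ f) * pderiv j h * toPoly b ⁅b i, b j⁆ +
        pderiv i f * pderiv j (dirDeriv b μ h) * toPoly b ⁅b i, b j⁆ +
        pderiv i f * pderiv j h * C (μ ⁅b i, b j⁆) := by
    intro i j
    rw [dirDeriv_mul, dirDeriv_mul, dirDeriv_toPoly, pderiv_dirDeriv, pderiv_dirDeriv]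
    ring
  simp only [liePB, cC, dirDeriv_sum, key, Finset.sum_add_distrib]

lemma dirDeriv_cC (f h : MvPolynomial ι ℂ) :
    dirDeriv b μ (cC b μ f h) = cC b μ (dirDeriv b μ f) h + cC b μ f (dirDeriv b μ h) := by
  have key : ∀ i j : ι,
      dirDeriv b μ (pderiv i f * pderiv j h * C (μ ⁅b i, b j⁆)) =
        pderiv i (dirDeriv b μ f) * pderiv j h * C (μ ⁅b i, b j⁆) +
        pderiv i f * pderiv j (dirDeriv b μ h) * C (μ ⁅b i, b j⁆) := by
    intro i j
    have hC : dirDeriv b μ (C (μ ⁅b i, b j⁆) : MvPolynomial ι ℂ) = 0 := by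
      simp [dirDeriv]
    rw [dirDeriv_mul, dirDeriv_mul, hC, pderiv_dirDeriv, pderiv_dirDeriv]
    ring
  simp only [cC, dirDeriv_sum, key, Finset.sum_add_distrib]

lemma toPoly_neg (x : g) : toPoly b (-x) = -toPoly b x := by
  simp [toPoly, Finset.sum_neg_distrib]

lemma liePB_antisymm (f h : MvPolynomial ι ℂ) : liePB b f h = -liePB b h f := by
  simp only [liePB]
  rw [Finset.sum_comm, ← Finset.sum_neg_distrib]
  refine Finset.sum_congr rfl fun i _ => ?_
  rw [← Finset.sum_neg_distrib]
  refine Finset.sum_congr rfl fun j _ => ?_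
  have e : toPoly b (⁅b j, b i⁆ : g) = -toPoly b ⁅b i, b j⁆ := by
    rw [← toPoly_neg, lie_skew]
  rw [e]
  ring

lemma cC_antisymm (f h : MvPolynomial ι ℂ) : cC b μ f h = -cC b μ h f := by
  simp only [cC]
  rw [Finset.sum_comm, ← Finset.sum_neg_distrib]
  refine Finset.sum_congr rfl fun i _ => ?_
  rw [← Finset.sum_neg_distrib]
  refine Finset.sum_congr rfl fun j _ => ?_
  have e : (C (μ ⁅b j, b i⁆) : MvPolynomial ι ℂ) = -C (μ ⁅b i, b j⁆) := by
    rw [← map_neg, ← map_neg, lie_skew]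
  rw [e]
  ring

/-- Claim A: `{∂^{n+1}Φ, f} = -(n+1) C(∂^nΦ, f)` for a Casimir `Φ`. -/
lemma claimA (Φ : MvPolynomial ι ℂ) (hΦ : ∀ f, liePB b Φ f = 0) :
    ∀ n : ℕ, ∀ f, liePB b ((dirDeriv b μ)^[n + 1] Φ) f =
      -((n : ℂ) + 1) • cC b μ ((dirDeriv b μ)^[n] Φ) f := by
  intro n
  induction n with
  | zero =>
    intro f
    have h0 := dirDeriv_liePB b μ Φ f
    rw [hΦ f, hΦ (dirDeriv b μ f), dirDeriv_zero] at h0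
    have h1 : liePB b (dirDeriv b μ Φ) f = -cC b μ Φ f := by linear_combination -h0
    simpa using h1
  | succ n ih =>
    intro f
    have h1 := dirDeriv_liePB b μ ((dirDeriv b μ)^[n + 1] Φ) f
    rw [ih f, dirDeriv_smul, dirDeriv_cC, ← Function.iterate_succ_apply' (dirDeriv b μ) n Φ,
      ih (dirDeriv b μ f)] at h1
    simp only [Nat.succ_eq_add_one] at h1
    have h2 : liePB b (dirDeriv b μ ((dirDeriv b μ)^[n + 1] Φ)) f =
        -((n : ℂ) + 1 + 1) • cC b μ ((dirDeriv b μ)^[n + 1] Φ) f := by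
      rw [smul_add] at h1
      have e1 : liePB b (dirDeriv b μ ((dirDeriv b μ)^[n + 1] Φ)) f =
          -((n : ℂ) + 1) • cC b μ ((dirDeriv b μ)^[n + 1] Φ) f
            - cC b μ ((dirDeriv b μ)^[n + 1] Φ) f := by linear_combination -h1
      have e2 : -((n : ℂ) + 1 + 1) = -((n : ℂ) + 1) + (-1) := by ring
      rw [e1, e2, add_smul, neg_one_smul, ← sub_eq_add_neg]
    rw [← Function.iterate_succ_apply' (dirDeriv b μ) (n + 1) Φ] at h2
    rw [h2]
    congr 1
    push_cast
    ring

end Stmt3Aux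

/-- for Poisson-central `Φ, Ψ ∈ S(g)^g`, all the directional derivatives
`∂_μⁿ Φ` and `∂_μᵐ Ψ` (for all `m, n ≥ 0`) pairwise Poisson-commute in `S(g)`;
in particular (taking `Ψ = Φ`) the `∂_μⁿ Φ` pairwise Poisson-commute. -/
theorem stmt3 (b : Module.Basis ι ℂ g) (μ : Module.Dual ℂ g)
    (Φ Ψ : MvPolynomial ι ℂ)
    (hΦ : ∀ f : MvPolynomial ι ℂ, liePB b Φ f = 0)
    (hΨ : ∀ f : MvPolynomial ι ℂ, liePB b Ψ f = 0) :
    ∀ m n : ℕ, liePB b ((dirDeriv b μ)^[n] Φ) ((dirDeriv b μ)^[m] Ψ) = 0 := by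
  suffices H : ∀ n m : ℕ, liePB b ((dirDeriv b μ)^[n] Φ) ((dirDeriv b μ)^[m] Ψ) = 0 by
    intro m n; exact H n m
  intro n
  induction n with
  | zero => intro m; exact hΦ _
  | succ n ih =>
    intro m
    rw [Stmt3Aux.claimA b μ Φ hΦ n]
    rw [Stmt3Aux.cC_antisymm]
    have h1 : liePB b ((dirDeriv b μ)^[m + 1] Ψ) ((dirDeriv b μ)^[n] Φ) =
        -((m : ℂ) + 1) • Stmt3Aux.cC b μ ((dirDeriv b μ)^[m] Ψ) ((dirDeriv b μ)^[n] Φ) :=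
      Stmt3Aux.claimA b μ Ψ hΨ m _
    have h2 : liePB b ((dirDeriv b μ)^[m + 1] Ψ) ((dirDeriv b μ)^[n] Φ) = 0 := by
      rw [Stmt3Aux.liePB_antisymm, ih (m + 1), neg_zero]
    rw [h2] at h1
    have hne : -((m : ℂ) + 1) ≠ 0 := by
      rw [neg_ne_zero]
      exact_mod_cast Nat.succ_ne_zero m
    have h3 : Stmt3Aux.cC b μ ((dirDeriv b μ)^[m] Ψ) ((dirDeriv b μ)^[n] Φ) = 0 :=
      (smul_eq_zero.mp h1.symm).resolve_left hne
    rw [h3, neg_zero, smul_zero]
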